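/- Suppose r̄ ≥ (4κ/3) r and τ₃ κ³ r < 1/4. Then ‖F^{1/2}(υ̃ − υ*)‖ ≤ (4/3) r, ‖D(υ̃ − υ*)‖ ≤ (4κ/3) r, and the Wilks expansion with cubic remainder holds: |2 L(υ̃) − 2 L(υ*) + ‖F^{-1/2} ξ‖²| ≤ (τ₃/2) ‖D F^{-1} ξ‖³. -/

import Mathlib

open MeasureTheory RealInnerProductSpace

/-- Application of a matrix to a vector in Euclidean space. -/
noncomputable def mApp {p q : ℕ} (M : Matrix (Fin q) (Fin p) ℝ)
    (v : EuclideanSpace ℝ (Fin p)) : EuclideanSpace ℝ (Fin q) :=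
  Matrix.toEuclideanLin M v

/-- Operator norm of (the Euclidean linear map induced by) a matrix. -/
noncomputable def mopNorm {p q : ℕ} (M : Matrix (Fin q) (Fin p) ℝ) : ℝ :=
  ‖(LinearMap.toContinuousLinearMap (Matrix.toEuclideanLin M))‖

open scoped ComplexOrder in
/-- The square root of a positive semidefinite matrix, as defined in the older Mathlib
(`Matrix.PosSemidef.sqrt`, since removed). -/
noncomputable def Matrix.PosSemidef.sqrt {n 𝕜 : Type*} [Fintype n] [DecidableEq n] [RCLike 𝕜]
    {A : Matrix n n 𝕜} (hA : A.PosSemidef) : Matrix n n 𝕜 :=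
  (hA.1.eigenvectorUnitary : Matrix n n 𝕜) *
    Matrix.diagonal (fun i => ((Real.sqrt (hA.1.eigenvalues i) : ℝ) : 𝕜)) *
    (star (hA.1.eigenvectorUnitary : Matrix n n 𝕜))

open Set

section Aux

lemma wilks_taylor1d {g : ℝ → ℝ} (hg : ContDiff ℝ 3 g) {M : ℝ}
    (hM : ∀ t ∈ Set.Icc (0:ℝ) 1, |iteratedDeriv 3 g t| ≤ M) :
    |deriv g 1 - deriv g 0 - iteratedDeriv 2 g 0| ≤ M / 2 ∧
    |g 1 - g 0 - deriv g 0 - iteratedDeriv 2 g 0 / 2| ≤ M / 6 := by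
  have hM0 : 0 ≤ M := le_trans (abs_nonneg _) (hM 0 (by simp))
  have hd : ∀ k : ℕ, k < 3 → ∀ t : ℝ,
      HasDerivAt (iteratedDeriv k g) (iteratedDeriv (k+1) g t) t := by
    intro k hk t
    rw [iteratedDeriv_succ]
    exact ((hg.differentiable_iteratedDeriv k (by exact_mod_cast hk)) t).hasDerivAt
  have hcont : ∀ k : ℕ, k < 3 → Continuous (iteratedDeriv k g) := by
    intro k hk
    exact (hg.differentiable_iteratedDeriv k (by exact_mod_cast hk)).continuous
  -- Step 1 : |d2 t - d2 0| ≤ M * t on [0,1]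
  have step1 : ∀ t ∈ Icc (0:ℝ) 1, |iteratedDeriv 2 g t - iteratedDeriv 2 g 0| ≤ M * t := by
    have := image_norm_le_of_norm_deriv_right_le_deriv_boundary'
      (f := fun t => iteratedDeriv 2 g t - iteratedDeriv 2 g 0)
      (f' := fun t => iteratedDeriv 3 g t)
      (a := 0) (b := 1)
      (((hcont 2 (by norm_num)).continuousOn).sub continuousOn_const)
      (fun x _ => (((hd 2 (by norm_num) x).sub_const _)).hasDerivWithinAt)
      (B := fun t => M * t) (B' := fun t => M)
      (by simp) (by fun_prop)
      (fun x _ => by simpa using ((hasDerivAt_id x).const_mul M).hasDerivWithinAt)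
      (fun x hx => by
        simpa [Real.norm_eq_abs] using hM x (Ico_subset_Icc_self hx))
    intro t ht
    simpa [Real.norm_eq_abs] using this ht
  -- Step 2
  have step2 : ∀ t ∈ Icc (0:ℝ) 1,
      |deriv g t - deriv g 0 - t * iteratedDeriv 2 g 0| ≤ M * t^2 / 2 := by
    have := image_norm_le_of_norm_deriv_right_le_deriv_boundary'
      (f := fun t => deriv g t - deriv g 0 - t * iteratedDeriv 2 g 0)
      (f' := fun t => iteratedDeriv 2 g t - iteratedDeriv 2 g 0)
      (a := 0) (b := 1)
      (by
        have h1 : Continuous (deriv g) := by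
          simpa [iteratedDeriv_one] using (hcont 1 (by norm_num))
        fun_prop)
      (fun x _ => by
        have h1 : HasDerivAt (fun t => deriv g t) (iteratedDeriv 2 g x) x := by
          have := hd 1 (by norm_num) x
          simpa [iteratedDeriv_one] using this
        have := (h1.sub_const (deriv g 0)).sub
          ((hasDerivAt_id x).mul_const (iteratedDeriv 2 g 0))
        exact (this.congr_deriv (by ring)).hasDerivWithinAt)
      (B := fun t => M * t^2 / 2) (B' := fun t => M * t)
      (by simp) (by fun_prop)
      (fun x _ => by
        have : HasDerivAt (fun t : ℝ => M * t^2 / 2) (M * x) x := by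
          have := ((hasDerivAt_pow 2 x).const_mul M).div_const 2
          exact this.congr_deriv (by norm_num; ring)
        exact this.hasDerivWithinAt)
      (fun x hx => by
        simpa [Real.norm_eq_abs] using step1 x (Ico_subset_Icc_self hx))
    intro t ht
    simpa [Real.norm_eq_abs] using this ht
  -- Step 3
  have step3 : ∀ t ∈ Icc (0:ℝ) 1,
      |g t - g 0 - t * deriv g 0 - t^2/2 * iteratedDeriv 2 g 0| ≤ M * t^3 / 6 := by
    have := image_norm_le_of_norm_deriv_right_le_deriv_boundary'
      (f := fun t => g t - g 0 - t * deriv g 0 - t^2/2 * iteratedDeriv 2 g 0)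
      (f' := fun t => deriv g t - deriv g 0 - t * iteratedDeriv 2 g 0)
      (a := 0) (b := 1)
      (by
        have h0 : Continuous g := hg.continuous
        fun_prop)
      (fun x _ => by
        have h0 : HasDerivAt g (deriv g x) x := (hg.differentiable (by norm_num) x).hasDerivAt
        have h2 : HasDerivAt (fun t : ℝ => t^2/2 * iteratedDeriv 2 g 0)
            (x * iteratedDeriv 2 g 0) x := by
          have := ((hasDerivAt_pow 2 x).div_const 2).mul_const (iteratedDeriv 2 g 0)
          exact this.congr_deriv (by norm_num)
        have := ((h0.sub_const (g 0)).sub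
          ((hasDerivAt_id x).mul_const (deriv g 0))).sub h2
        refine HasDerivAt.hasDerivWithinAt ?_
        exact this.congr_deriv (by ring))
      (B := fun t => M * t^3 / 6) (B' := fun t => M * t^2 / 2)
      (by simp) (by fun_prop)
      (fun x _ => by
        have : HasDerivAt (fun t : ℝ => M * t^3 / 6) (M * x^2 / 2) x := by
          have := ((hasDerivAt_pow 3 x).const_mul M).div_const 6
          exact this.congr_deriv (by norm_num; ring)
        exact this.hasDerivWithinAt)
      (fun x hx => by
        simpa [Real.norm_eq_abs] using step2 x (Ico_subset_Icc_self hx))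
    intro t ht
    simpa [Real.norm_eq_abs] using this ht
  constructor
  · simpa using step2 1 (by norm_num)
  · have := step3 1 (by norm_num)
    have e : g 1 - g 0 - 1 * deriv g 0 - 1^2/2 * iteratedDeriv 2 g 0
        = g 1 - g 0 - deriv g 0 - iteratedDeriv 2 g 0 / 2 := by ring
    rw [e] at this
    simpa using this

variable {E : Type*} [NormedAddCommGroup E] [NormedSpace ℝ E]

lemma wilks_iteratedFDeriv_comp_const_add (f : E → ℝ) (hf : ContDiff ℝ 3 f) (c : E)
    (n : ℕ) (hn : n ≤ 3) :
    ∀ y : E, iteratedFDeriv ℝ n (fun z => f (c + z)) y = iteratedFDeriv ℝ n f (c + y) := by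
  induction n with
  | zero => intro y; ext m; simp
  | succ k ih =>
    have hk : k ≤ 3 := le_trans (Nat.le_succ k) hn
    intro y
    ext m
    rw [iteratedFDeriv_succ_apply_left, iteratedFDeriv_succ_apply_left]
    have hdiff : Differentiable ℝ (iteratedFDeriv ℝ k f) :=
      hf.differentiable_iteratedFDeriv (by exact_mod_cast hn)
    have hcomp : HasFDerivAt (fun z => iteratedFDeriv ℝ k f (c + z))
        (fderiv ℝ (iteratedFDeriv ℝ k f) (c + y)) y := by
      have h1 : HasFDerivAt (fun z : E => c + z) (ContinuousLinearMap.id ℝ E) y :=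
        (hasFDerivAt_id y).const_add c
      have h2 : HasFDerivAt (iteratedFDeriv ℝ k f)
          (fderiv ℝ (iteratedFDeriv ℝ k f) (c + y)) (c + y) :=
        (hdiff (c + y)).hasFDerivAt
      have := h2.comp y h1
      rw [ContinuousLinearMap.comp_id] at this
      exact this
    have heq : fderiv ℝ (iteratedFDeriv ℝ k (fun z => f (c + z))) y
        = fderiv ℝ (iteratedFDeriv ℝ k f) (c + y) := by
      have h : (iteratedFDeriv ℝ k (fun z => f (c + z)))
          = fun z => iteratedFDeriv ℝ k f (c + z) := funext fun z => ih hk z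
      rw [h]
      exact hcomp.fderiv
    rw [heq]

lemma wilks_iteratedDeriv_line (f : E → ℝ) (hf : ContDiff ℝ 3 f) (c x : E)
    (n : ℕ) (hn : n ≤ 3) (t : ℝ) :
    iteratedDeriv n (fun s : ℝ => f (c + s • x)) t
      = iteratedFDeriv ℝ n f (c + t • x) (fun _ => x) := by
  have hf1 : ContDiff ℝ 3 (fun z => f (c + z)) :=
    hf.comp (contDiff_const.add contDiff_id)
  set L : ℝ →L[ℝ] E := (ContinuousLinearMap.id ℝ ℝ).smulRight x with hL
  have hLapp : ∀ s : ℝ, L s = s • x := fun s => by simp [hL]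
  have hcomp : (fun s : ℝ => f (c + s • x)) = (fun z => f (c + z)) ∘ L := by
    funext s; simp [hLapp]
  rw [iteratedDeriv_eq_iteratedFDeriv, hcomp,
    L.iteratedFDeriv_comp_right hf1 t (i := n) (by exact_mod_cast hn)]
  simp [hLapp, wilks_iteratedFDeriv_comp_const_add f hf c n hn]

lemma wilks_poly_ineq (s β ε : ℝ) (hs0 : 0 ≤ s) (hs : s ≤ 7/3) (hβ0 : 0 ≤ β) (hβ : β ≤ 1)
    (hε0 : 0 ≤ ε) (hε : ε ≤ 1/4) : ε/3*(s+β)^3 ≤ s^2 + ε/2*β^3 := by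
  have e1 : ε*s*β^2 ≤ 3/8*s^2 + 2/3*ε^2*β^4 := by nlinarith [sq_nonneg (3/4*s - ε*β^2)]
  have e2 : ε^2*β^4 ≤ ε/4*β^3 := by
    have h1 : ε*β ≤ 1/4 := by nlinarith
    have h2 : 0 ≤ ε*β^3 := by positivity
    nlinarith [mul_le_mul_of_nonneg_left h1 h2]
  have e3 : ε*s^2*β ≤ 1/4*s^2 := by
    nlinarith [mul_nonneg (mul_nonneg hε0 hs0) hs0, sq_nonneg s, mul_nonneg (sq_nonneg s) hβ0]
  have e4 : ε/3*s^3 ≤ 7/36*s^2 := by nlinarith [mul_nonneg (mul_nonneg hε0 hs0) hs0]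
  nlinarith [e1, e2, e3, e4]

end Aux

section MatrixAux

variable {p : ℕ}

lemma wilks_mApp_mul (A B : Matrix (Fin p) (Fin p) ℝ) (v : EuclideanSpace ℝ (Fin p)) :
    mApp (A * B) v = mApp A (mApp B v) := by
  simp [mApp, Matrix.toEuclideanLin_apply, Matrix.mulVec_mulVec]

lemma wilks_mApp_one (v : EuclideanSpace ℝ (Fin p)) :
    mApp (1 : Matrix (Fin p) (Fin p) ℝ) v = v := by
  simp [mApp, Matrix.toEuclideanLin_apply]

lemma wilks_mApp_smul (M : Matrix (Fin p) (Fin p) ℝ) (a : ℝ) (v : EuclideanSpace ℝ (Fin p)) :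
    mApp M (a • v) = a • mApp M v := map_smul (Matrix.toEuclideanLin M) a v

lemma wilks_mApp_add (M : Matrix (Fin p) (Fin p) ℝ) (u v : EuclideanSpace ℝ (Fin p)) :
    mApp M (u + v) = mApp M u + mApp M v := map_add (Matrix.toEuclideanLin M) u v

lemma wilks_mApp_neg (M : Matrix (Fin p) (Fin p) ℝ) (v : EuclideanSpace ℝ (Fin p)) :
    mApp M (-v) = - mApp M v := map_neg (Matrix.toEuclideanLin M) v

lemma wilks_mApp_matrix_sub (A B : Matrix (Fin p) (Fin p) ℝ) (v : EuclideanSpace ℝ (Fin p)) :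
    mApp (A - B) v = mApp A v - mApp B v := by
  simp [mApp, map_sub]

lemma wilks_mApp_matrix_smul (a : ℝ) (A : Matrix (Fin p) (Fin p) ℝ)
    (v : EuclideanSpace ℝ (Fin p)) : mApp (a • A) v = a • mApp A v := by
  simp [mApp, _root_.map_smul]

lemma wilks_inner_mApp_symm {M : Matrix (Fin p) (Fin p) ℝ} (hM : M.IsHermitian)
    (u v : EuclideanSpace ℝ (Fin p)) : ⟪mApp M u, v⟫ = ⟪u, mApp M v⟫ := by
  have := (Matrix.isHermitian_iff_isSymmetric.mp hM) u v
  simpa [mApp] using this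

lemma wilks_posSemidef_inner_nonneg {M : Matrix (Fin p) (Fin p) ℝ} (hM : M.PosSemidef)
    (v : EuclideanSpace ℝ (Fin p)) : 0 ≤ ⟪mApp M v, v⟫ := by
  have h := hM.dotProduct_mulVec_nonneg (⇑v)
  have e : ⟪mApp M v, v⟫ = dotProduct (star (⇑v)) (M.mulVec (⇑v)) := by
    simp [mApp, Matrix.toEuclideanLin_apply, PiLp.inner_apply, RCLike.inner_apply,
      dotProduct, mul_comm]
  rw [e]
  exact h

lemma wilks_sqrt_isHermitian {p : ℕ} {A : Matrix (Fin p) (Fin p) ℝ} (hA : A.PosSemidef) :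
    (Matrix.PosSemidef.sqrt hA).IsHermitian := by
  unfold Matrix.PosSemidef.sqrt Matrix.IsHermitian
  simp [Matrix.conjTranspose_mul, Matrix.star_eq_conjTranspose, mul_assoc]

lemma wilks_sqrt_mul_self {p : ℕ} {A : Matrix (Fin p) (Fin p) ℝ} (hA : A.PosSemidef) :
    Matrix.PosSemidef.sqrt hA * Matrix.PosSemidef.sqrt hA = A := by
  unfold Matrix.PosSemidef.sqrt
  have hU : star (hA.1.eigenvectorUnitary : Matrix (Fin p) (Fin p) ℝ) *
      (hA.1.eigenvectorUnitary : Matrix (Fin p) (Fin p) ℝ) = 1 := Unitary.coe_star_mul_self _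
  have hd : Matrix.diagonal (fun i => (RCLike.ofReal (Real.sqrt (hA.1.eigenvalues i)) : ℝ)) *
      Matrix.diagonal (fun i => (RCLike.ofReal (Real.sqrt (hA.1.eigenvalues i)) : ℝ))
      = Matrix.diagonal (RCLike.ofReal ∘ hA.1.eigenvalues) := by
    rw [Matrix.diagonal_mul_diagonal]
    congr 1; funext i
    simp [Real.mul_self_sqrt (hA.eigenvalues_nonneg i)]
  conv_rhs => rw [hA.1.spectral_theorem, Unitary.conjStarAlgAut_apply]
  calc _ = (hA.1.eigenvectorUnitary : Matrix (Fin p) (Fin p) ℝ) *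
        (Matrix.diagonal (fun i => (RCLike.ofReal (Real.sqrt (hA.1.eigenvalues i)) : ℝ)) *
        (star (hA.1.eigenvectorUnitary : Matrix (Fin p) (Fin p) ℝ) *
      (hA.1.eigenvectorUnitary : Matrix (Fin p) (Fin p) ℝ)) *
      Matrix.diagonal (fun i => (RCLike.ofReal (Real.sqrt (hA.1.eigenvalues i)) : ℝ))) *
        star (hA.1.eigenvectorUnitary : Matrix (Fin p) (Fin p) ℝ) := by
        simp only [mul_assoc]
    _ = _ := by rw [hU, mul_one, hd]

end MatrixAux
set_option maxHeartbeats 1000000 in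
theorem wilks_expansion_third_order
    {p : ℕ} (hp : 1 ≤ p)
    (f : EuclideanSpace ℝ (Fin p) → ℝ)
    (hconv : ConvexOn ℝ Set.univ f)
    (hf : ContDiff ℝ 3 f)
    (υs : EuclideanSpace ℝ (Fin p))
    (hgrad : gradient f υs = 0)
    (F : Matrix (Fin p) (Fin p) ℝ) (hF : F.PosDef)
    (hFdef : ∀ u w : EuclideanSpace ℝ (Fin p),
      iteratedFDeriv ℝ 2 f υs ![u, w] = ⟪mApp F u, w⟫)
    (D : Matrix (Fin p) (Fin p) ℝ) (hD : D.PosDef)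
    (κ : ℝ) (hκ : 0 < κ)
    (hLoew : (κ ^ 2 • F - D * D).PosSemidef)
    (τ3 rb : ℝ) (hτ3 : 0 < τ3) (hrb : 0 < rb)
    (hT3 : ∀ υ : EuclideanSpace ℝ (Fin p), ‖mApp D (υ - υs)‖ ≤ rb →
      ∀ u w : EuclideanSpace ℝ (Fin p),
        |iteratedFDeriv ℝ 3 f υ ![u, u, w]| ≤ τ3 * ‖mApp D u‖ ^ 2 * ‖mApp D w‖)
    (ξ υt : EuclideanSpace ℝ (Fin p))
    (hmin : ∀ υ : EuclideanSpace ℝ (Fin p), f υt + ⟪ξ, υt⟫ ≤ f υ + ⟪ξ, υ⟫)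
    (r : ℝ) (hrpos : 0 < r)
    (hξr : ‖mApp (Matrix.PosSemidef.sqrt hF.posSemidef)⁻¹ ξ‖ ≤ r)
    (h1 : rb ≥ 4 * κ / 3 * r) (h2 : τ3 * κ ^ 3 * r < 1 / 4) :
    ‖mApp (Matrix.PosSemidef.sqrt hF.posSemidef) (υt - υs)‖ ≤ 4 / 3 * r ∧
    ‖mApp D (υt - υs)‖ ≤ 4 * κ / 3 * r ∧
    |2 * (f υt + ⟪ξ, υt⟫) - 2 * (f υs + ⟪ξ, υs⟫) + ‖mApp (Matrix.PosSemidef.sqrt hF.posSemidef)⁻¹ ξ‖ ^ 2| ≤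
      τ3 / 2 * ‖mApp D (mApp F⁻¹ ξ)‖ ^ 3 := by
  classical
  set S := Matrix.PosSemidef.sqrt hF.posSemidef with hSdef
  have hSh : S.IsHermitian := wilks_sqrt_isHermitian hF.posSemidef
  have hSS : S * S = F := wilks_sqrt_mul_self hF.posSemidef
  have hFdetu : IsUnit F.det := isUnit_iff_ne_zero.mpr (ne_of_gt hF.det_pos)
  have hSdetu : IsUnit S.det := by
    have h : S.det * S.det = F.det := by rw [← Matrix.det_mul, hSS]
    refine isUnit_iff_ne_zero.mpr fun h0 => ?_
    rw [h0, mul_zero] at h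
    exact (ne_of_gt hF.det_pos) h.symm
  have hSiS : S⁻¹ * S = 1 := Matrix.nonsing_inv_mul S hSdetu
  have hSSi : S * S⁻¹ = 1 := Matrix.mul_nonsing_inv S hSdetu
  have hSih : (S⁻¹).IsHermitian := hSh.inv
  have hDh : D.IsHermitian := hD.1
  -- quadratic identities
  have hFq : ∀ v : EuclideanSpace ℝ (Fin p), ⟪mApp F v, v⟫ = ‖mApp S v‖ ^ 2 := by
    intro v
    rw [← hSS, wilks_mApp_mul, wilks_inner_mApp_symm hSh (mApp S v) v,
      real_inner_self_eq_norm_sq]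
  have hxi : ∀ v : EuclideanSpace ℝ (Fin p), ⟪ξ, v⟫ = ⟪mApp S⁻¹ ξ, mApp S v⟫ := by
    intro v
    rw [wilks_inner_mApp_symm hSih, ← wilks_mApp_mul, hSiS, wilks_mApp_one]
  have hxi_le : ∀ v : EuclideanSpace ℝ (Fin p), |⟪ξ, v⟫| ≤ r * ‖mApp S v‖ := by
    intro v
    rw [hxi v]
    exact le_trans (abs_real_inner_le_norm _ _)
      (mul_le_mul_of_nonneg_right hξr (norm_nonneg _))
  have hDS : ∀ v : EuclideanSpace ℝ (Fin p), ‖mApp D v‖ ≤ κ * ‖mApp S v‖ := by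
    intro v
    have h0 := wilks_posSemidef_inner_nonneg hLoew v
    rw [wilks_mApp_matrix_sub, inner_sub_left, wilks_mApp_matrix_smul,
      real_inner_smul_left, hFq v, wilks_mApp_mul,
      wilks_inner_mApp_symm hDh (mApp D v) v, real_inner_self_eq_norm_sq] at h0
    have h1' : ‖mApp D v‖ ^ 2 ≤ (κ * ‖mApp S v‖) ^ 2 := by rw [mul_pow]; linarith
    have h2' := Real.sqrt_le_sqrt h1'
    rwa [Real.sqrt_sq (norm_nonneg _), Real.sqrt_sq (by positivity)] at h2'
  have hgradf : fderiv ℝ f υs = 0 := by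
    have h0 : (InnerProductSpace.toDual ℝ (EuclideanSpace ℝ (Fin p))).symm (fderiv ℝ f υs) = 0 :=
      hgrad
    have h1' := congrArg (InnerProductSpace.toDual ℝ (EuclideanSpace ℝ (Fin p))) h0
    simpa using h1'
  have hvec2 : ∀ y : EuclideanSpace ℝ (Fin p), (fun _ : Fin 2 => y) = ![y, y] := by
    intro y; funext i; fin_cases i <;> rfl
  have hvec3 : ∀ y : EuclideanSpace ℝ (Fin p), (fun _ : Fin 3 => y) = ![y, y, y] := by
    intro y; funext i; fin_cases i <;> rfl
  -- Taylor expansions with third order remainder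
  have Tay : ∀ y : EuclideanSpace ℝ (Fin p), ‖mApp D y‖ ≤ rb →
      |fderiv ℝ f (υs + y) y - ⟪mApp F y, y⟫| ≤ τ3 / 2 * ‖mApp D y‖ ^ 3 ∧
      |f (υs + y) - f υs - ⟪mApp F y, y⟫ / 2| ≤ τ3 / 6 * ‖mApp D y‖ ^ 3 := by
    intro y hy
    have hgC : ContDiff ℝ 3 (fun s : ℝ => f (υs + s • y)) :=
      hf.comp (contDiff_const.add (contDiff_id.smul contDiff_const))
    have hM : ∀ t ∈ Set.Icc (0:ℝ) 1,
        |iteratedDeriv 3 (fun s : ℝ => f (υs + s • y)) t| ≤ τ3 * ‖mApp D y‖ ^ 3 := by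
      intro t ht
      rw [wilks_iteratedDeriv_line f hf υs y 3 le_rfl t]
      have hmem : ‖mApp D ((υs + t • y) - υs)‖ ≤ rb := by
        have e : (υs + t • y) - υs = t • y := by abel
        rw [e, wilks_mApp_smul, norm_smul, Real.norm_eq_abs]
        calc |t| * ‖mApp D y‖ ≤ 1 * ‖mApp D y‖ := by
              apply mul_le_mul_of_nonneg_right _ (norm_nonneg _)
              rw [abs_of_nonneg ht.1]; exact ht.2
          _ = ‖mApp D y‖ := one_mul _
          _ ≤ rb := hy
      have h3 := hT3 (υs + t • y) hmem y y
      rw [← hvec3 y] at h3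
      calc |iteratedFDeriv ℝ 3 f (υs + t • y) (fun _ => y)|
          ≤ τ3 * ‖mApp D y‖ ^ 2 * ‖mApp D y‖ := h3
        _ = τ3 * ‖mApp D y‖ ^ 3 := by ring
    have h10 := wilks_taylor1d hgC hM
    have e0 : (fun s : ℝ => f (υs + s • y)) 0 = f υs := by simp
    have e1 : (fun s : ℝ => f (υs + s • y)) 1 = f (υs + y) := by simp
    have ed0 : deriv (fun s : ℝ => f (υs + s • y)) 0 = 0 := by
      rw [← iteratedDeriv_one, wilks_iteratedDeriv_line f hf υs y 1 (by norm_num) 0,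
        iteratedFDeriv_one_apply]
      simp [hgradf]
    have ed1 : deriv (fun s : ℝ => f (υs + s • y)) 1 = fderiv ℝ f (υs + y) y := by
      rw [← iteratedDeriv_one, wilks_iteratedDeriv_line f hf υs y 1 (by norm_num) 1,
        iteratedFDeriv_one_apply]
      simp
    have ed2 : iteratedDeriv 2 (fun s : ℝ => f (υs + s • y)) 0 = ⟪mApp F y, y⟫ := by
      rw [wilks_iteratedDeriv_line f hf υs y 2 (by norm_num) 0]
      have e : υs + (0:ℝ) • y = υs := by simp
      rw [e, hvec2 y, hFdef y y]
    obtain ⟨hA, hB⟩ := h10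
    rw [ed1, ed0, ed2, sub_zero] at hA
    rw [ed0, ed2, sub_zero] at hB
    simp only [one_smul, zero_smul, add_zero] at hB
    constructor
    · calc |fderiv ℝ f (υs + y) y - ⟪mApp F y, y⟫| ≤ τ3 * ‖mApp D y‖ ^ 3 / 2 := hA
        _ = τ3 / 2 * ‖mApp D y‖ ^ 3 := by ring
    · calc |f (υs + y) - f υs - ⟪mApp F y, y⟫ / 2| ≤ τ3 * ‖mApp D y‖ ^ 3 / 6 := hB
        _ = τ3 / 6 * ‖mApp D y‖ ^ 3 := by ring
  set x := υt - υs with hxdef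
  have hpt : υs + x = υt := by rw [hxdef]; abel
  -- convexity of the objective along the line
  have hLconv : ConvexOn ℝ Set.univ
      (fun υ : EuclideanSpace ℝ (Fin p) => f υ + ⟪ξ, υ⟫) := by
    refine hconv.add ⟨convex_univ, ?_⟩
    intro a _ b _ s t hs ht hst
    apply le_of_eq
    rw [inner_add_right, real_inner_smul_right, real_inner_smul_right, smul_eq_mul, smul_eq_mul]
  have hline_conv : ConvexOn ℝ Set.univ
      (fun s : ℝ => f (υs + s • x) + ⟪ξ, υs + s • x⟫) := by
    refine ⟨convex_univ, ?_⟩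
    intro s _ t _ a b ha hb hab
    have hptc : υs + (a * s + b * t) • x = a • (υs + s • x) + b • (υs + t • x) := by
      have e : a • (υs + s • x) + b • (υs + t • x) = (a + b) • υs + (a * s + b * t) • x := by
        module
      rw [e, hab, one_smul]
    have := hLconv.2 (Set.mem_univ (υs + s • x)) (Set.mem_univ (υs + t • x)) ha hb hab
    simpa [smul_eq_mul, hptc] using this
  have hderiv_line : ∀ t : ℝ,
      HasDerivAt (fun s : ℝ => f (υs + s • x) + ⟪ξ, υs + s • x⟫)
        (fderiv ℝ f (υs + t • x) x + ⟪ξ, x⟫) t := by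
    intro t
    have h1' : HasDerivAt (fun s : ℝ => υs + s • x) x t := by
      simpa using ((hasDerivAt_id t).smul_const x).const_add υs
    have h2' : HasDerivAt (fun s : ℝ => f (υs + s • x)) (fderiv ℝ f (υs + t • x) x) t := by
      have hfd : HasFDerivAt f (fderiv ℝ f (υs + t • x)) (υs + t • x) :=
        (hf.differentiable (by norm_num) _).hasFDerivAt
      exact hfd.comp_hasDerivAt t h1'
    have h3' : HasDerivAt (fun s : ℝ => ⟪ξ, υs + s • x⟫) (⟪ξ, x⟫) t := by
      have e : (fun s : ℝ => ⟪ξ, υs + s • x⟫) = fun s : ℝ => ⟪ξ, υs⟫ + s * ⟪ξ, x⟫ := by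
        funext s; rw [inner_add_right, real_inner_smul_right]
      rw [e]
      simpa using ((hasDerivAt_id t).mul_const ⟪ξ, x⟫).const_add ⟪ξ, υs⟫
    exact h2'.add h3'
  -- Part 1 : localization
  have part1 : ‖mApp S x‖ ≤ 4 / 3 * r := by
    by_contra hgt
    push_neg at hgt
    have ha0 : (0:ℝ) < ‖mApp S x‖ := lt_trans (by positivity) hgt
    set t0 : ℝ := (4 / 3 * r) / ‖mApp S x‖ with ht0def
    have ht00 : 0 < t0 := div_pos (by positivity) ha0
    have ht01 : t0 < 1 := (div_lt_one ha0).mpr hgt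
    have hSy : ‖mApp S (t0 • x)‖ = 4 / 3 * r := by
      rw [wilks_mApp_smul, norm_smul, Real.norm_eq_abs, abs_of_pos ht00, ht0def,
        div_mul_cancel₀ _ (ne_of_gt ha0)]
    have hDy : ‖mApp D (t0 • x)‖ ≤ κ * (4 / 3 * r) := by
      have h := hDS (t0 • x); rwa [hSy] at h
    have hDyrb : ‖mApp D (t0 • x)‖ ≤ rb := by
      refine le_trans hDy (le_trans (le_of_eq (by ring)) h1)
    have hTay := (Tay (t0 • x) hDyrb).1
    have hminline : f (υs + (1:ℝ) • x) + ⟪ξ, υs + (1:ℝ) • x⟫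
        ≤ f (υs + t0 • x) + ⟪ξ, υs + t0 • x⟫ := by
      rw [one_smul, hpt]; exact hmin _
    have hslope := hline_conv.deriv_le_slope (Set.mem_univ t0) (Set.mem_univ 1) ht01
      (hderiv_line t0).differentiableAt
    have hderiv_eq : deriv (fun s : ℝ => f (υs + s • x) + ⟪ξ, υs + s • x⟫) t0
        = fderiv ℝ f (υs + t0 • x) x + ⟪ξ, x⟫ := (hderiv_line t0).deriv
    have hslope_le : slope (fun s : ℝ => f (υs + s • x) + ⟪ξ, υs + s • x⟫) t0 1 ≤ 0 := by
      rw [slope_def_field]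
      apply div_nonpos_of_nonpos_of_nonneg _ (by linarith)
      simpa using sub_nonpos.mpr hminline
    have hkey : fderiv ℝ f (υs + t0 • x) x + ⟪ξ, x⟫ ≤ 0 := by
      rw [← hderiv_eq]; exact le_trans hslope hslope_le
    have hkey2 : fderiv ℝ f (υs + t0 • x) (t0 • x) + ⟪ξ, t0 • x⟫ ≤ 0 := by
      rw [(fderiv ℝ f (υs + t0 • x)).map_smul, real_inner_smul_right]
      have h := mul_le_mul_of_nonneg_left hkey (le_of_lt ht00)
      rw [mul_zero] at h
      calc t0 • (fderiv ℝ f (υs + t0 • x)) x + t0 * ⟪ξ, x⟫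
          = t0 * ((fderiv ℝ f (υs + t0 • x)) x + ⟪ξ, x⟫) := by
            rw [smul_eq_mul]; ring
        _ ≤ 0 := h
    have hF1 : ⟪mApp F (t0 • x), t0 • x⟫ = (4 / 3 * r) ^ 2 := by rw [hFq, hSy]
    have hA_lb := (abs_le.mp hTay).1
    have hI_lb := (abs_le.mp (hxi_le (t0 • x))).1
    rw [hSy] at hI_lb
    have hcube : ‖mApp D (t0 • x)‖ ^ 3 ≤ (κ * (4 / 3 * r)) ^ 3 :=
      pow_le_pow_left₀ (norm_nonneg _) hDy 3
    have hcube3 : τ3 / 2 * ‖mApp D (t0 • x)‖ ^ 3 ≤ τ3 / 2 * (κ * (4 / 3 * r)) ^ 3 :=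
      mul_le_mul_of_nonneg_left hcube (by positivity)
    rw [hF1] at hA_lb
    have heq : τ3 / 2 * (κ * (4 / 3 * r)) ^ 3 = (τ3 * κ ^ 3 * r) * (32 / 27 * r ^ 2) := by ring
    have hlt : (τ3 * κ ^ 3 * r) * (32 / 27 * r ^ 2) < (1 / 4) * (32 / 27 * r ^ 2) :=
      mul_lt_mul_of_pos_right h2 (by positivity)
    have hc : τ3 / 2 * ‖mApp D (t0 • x)‖ ^ 3 < 8 / 27 * r ^ 2 := by
      calc τ3 / 2 * ‖mApp D (t0 • x)‖ ^ 3 ≤ τ3 / 2 * (κ * (4 / 3 * r)) ^ 3 := hcube3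
        _ = (τ3 * κ ^ 3 * r) * (32 / 27 * r ^ 2) := heq
        _ < (1 / 4) * (32 / 27 * r ^ 2) := hlt
        _ = 8 / 27 * r ^ 2 := by ring
    have hA2 : (4 / 3 * r) ^ 2 = 16 / 9 * r ^ 2 := by ring
    have hI2 : r * (4 / 3 * r) = 4 / 3 * r ^ 2 := by ring
    rw [hA2] at hA_lb
    rw [hI2] at hI_lb
    have hr2 : 0 < r ^ 2 := by positivity
    linarith [hkey2, hA_lb, hI_lb, hc]
  have part2 : ‖mApp D x‖ ≤ 4 * κ / 3 * r := by
    calc ‖mApp D x‖ ≤ κ * ‖mApp S x‖ := hDS x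
      _ ≤ κ * (4 / 3 * r) := mul_le_mul_of_nonneg_left part1 hκ.le
      _ = 4 * κ / 3 * r := by ring
  refine ⟨part1, part2, ?_⟩
  -- Part 3 : Wilks expansion
  set u := mApp F⁻¹ ξ with hudef
  have hFFi : F * F⁻¹ = 1 := Matrix.mul_nonsing_inv F hFdetu
  have hFi : F⁻¹ = S⁻¹ * S⁻¹ := by rw [← hSS, Matrix.mul_inv_rev]
  have hSu : mApp S u = mApp S⁻¹ ξ := by
    rw [hudef]
    calc mApp S (mApp F⁻¹ ξ) = mApp (S * F⁻¹) ξ := (wilks_mApp_mul _ _ _).symm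
      _ = mApp S⁻¹ ξ := by rw [hFi, ← mul_assoc, hSSi, one_mul]
  have hFu : mApp F u = ξ := by
    rw [hudef]
    calc mApp F (mApp F⁻¹ ξ) = mApp (F * F⁻¹) ξ := (wilks_mApp_mul _ _ _).symm
      _ = ξ := by rw [hFFi, wilks_mApp_one]
  have hiu : ⟪ξ, u⟫ = ‖mApp S⁻¹ ξ‖ ^ 2 := by
    rw [hxi u, hSu, real_inner_self_eq_norm_sq]
  have hFuu : ⟪mApp F u, u⟫ = ‖mApp S⁻¹ ξ‖ ^ 2 := by rw [hFu]; exact hiu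
  have hSun : ‖mApp S u‖ ≤ r := by rw [hSu]; exact hξr
  have hBu : ‖mApp D u‖ ≤ κ * r := le_trans (hDS u) (mul_le_mul_of_nonneg_left hSun hκ.le)
  have hDurb : ‖mApp D (-u)‖ ≤ rb := by
    rw [wilks_mApp_neg, norm_neg]
    refine le_trans hBu (le_trans ?_ h1)
    nlinarith [hκ, hrpos]
  have hTayu := (Tay (-u) hDurb).2
  simp only [wilks_mApp_neg, norm_neg, inner_neg_neg] at hTayu
  rw [hFuu] at hTayu
  have hup : 2 * (f υt + ⟪ξ, υt⟫) - 2 * (f υs + ⟪ξ, υs⟫) + ‖mApp S⁻¹ ξ‖ ^ 2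
      ≤ τ3 / 2 * ‖mApp D u‖ ^ 3 := by
    have hmin1 := hmin (υs + -u)
    have hiun : ⟪ξ, υs + -u⟫ = ⟪ξ, υs⟫ - ‖mApp S⁻¹ ξ‖ ^ 2 := by
      rw [inner_add_right, inner_neg_right, hiu]; ring
    have habs := (abs_le.mp hTayu).2
    have hcube0 : 0 ≤ τ3 * ‖mApp D u‖ ^ 3 := by positivity
    rw [hiun] at hmin1
    linarith
  have hDxrb : ‖mApp D x‖ ≤ rb := le_trans part2 h1
  have hTayx := (Tay x hDxrb).2
  rw [hpt] at hTayx
  have hq_id : ⟪mApp F x, x⟫ + 2 * ⟪ξ, x⟫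
      = ‖mApp S x + mApp S⁻¹ ξ‖ ^ 2 - ‖mApp S⁻¹ ξ‖ ^ 2 := by
    have hn := norm_add_sq_real (mApp S x) (mApp S⁻¹ ξ)
    have hinner : ⟪mApp S x, mApp S⁻¹ ξ⟫ = ⟪ξ, x⟫ := by
      rw [real_inner_comm]; exact (hxi x).symm
    rw [hFq x]
    linarith [hn, hinner]
  have hq73 : ‖mApp S x + mApp S⁻¹ ξ‖ ≤ 7 / 3 * r := by
    calc ‖mApp S x + mApp S⁻¹ ξ‖ ≤ ‖mApp S x‖ + ‖mApp S⁻¹ ξ‖ := norm_add_le _ _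
      _ ≤ 4 / 3 * r + r := add_le_add part1 hξr
      _ = 7 / 3 * r := by ring
  have hSxu : mApp S (x + u) = mApp S x + mApp S⁻¹ ξ := by rw [wilks_mApp_add, hSu]
  have hDxq : ‖mApp D x‖ ≤ κ * ‖mApp S x + mApp S⁻¹ ξ‖ + ‖mApp D u‖ := by
    have e : x = (x + u) + -u := by abel
    calc ‖mApp D x‖ = ‖mApp D ((x + u) + -u)‖ := by rw [← e]
      _ = ‖mApp D (x + u) + mApp D (-u)‖ := by rw [wilks_mApp_add]
      _ ≤ ‖mApp D (x + u)‖ + ‖mApp D (-u)‖ := norm_add_le _ _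
      _ ≤ κ * ‖mApp S (x + u)‖ + ‖mApp D u‖ := by
          rw [wilks_mApp_neg, norm_neg]
          exact add_le_add_left (hDS _) _
      _ = κ * ‖mApp S x + mApp S⁻¹ ξ‖ + ‖mApp D u‖ := by rw [hSxu]
  have hDx3 : ‖mApp D x‖ ^ 3 ≤ (κ * ‖mApp S x + mApp S⁻¹ ξ‖ + ‖mApp D u‖) ^ 3 :=
    pow_le_pow_left₀ (norm_nonneg _) hDxq 3
  have hpoly : τ3 / 3 * (κ * ‖mApp S x + mApp S⁻¹ ξ‖ + ‖mApp D u‖) ^ 3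
      ≤ ‖mApp S x + mApp S⁻¹ ξ‖ ^ 2 + τ3 / 2 * ‖mApp D u‖ ^ 3 := by
    set q := ‖mApp S x + mApp S⁻¹ ξ‖ with hqdef
    set B := ‖mApp D u‖ with hBdef
    have hq0 : 0 ≤ q := norm_nonneg _
    have hB0 : 0 ≤ B := norm_nonneg _
    have hp := wilks_poly_ineq (q / r) (B / (κ * r)) (τ3 * κ ^ 3 * r)
      (by positivity) ((div_le_iff₀ hrpos).mpr (by linarith))
      (by positivity) ((div_le_one (by positivity)).mpr hBu)
      (by positivity) (le_of_lt h2)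
    have hker : q ^ 2 + τ3 / 2 * B ^ 3 - τ3 / 3 * (κ * q + B) ^ 3
        = r ^ 2 * ((q / r) ^ 2 + (τ3 * κ ^ 3 * r) / 2 * (B / (κ * r)) ^ 3
          - (τ3 * κ ^ 3 * r) / 3 * (q / r + B / (κ * r)) ^ 3) := by
      field_simp
    have h0 : 0 ≤ q ^ 2 + τ3 / 2 * B ^ 3 - τ3 / 3 * (κ * q + B) ^ 3 := by
      rw [hker]
      apply mul_nonneg (sq_nonneg r)
      linarith [hp]
    linarith
  have hlow : -(τ3 / 2 * ‖mApp D u‖ ^ 3)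
      ≤ 2 * (f υt + ⟪ξ, υt⟫) - 2 * (f υs + ⟪ξ, υs⟫) + ‖mApp S⁻¹ ξ‖ ^ 2 := by
    have habs := (abs_le.mp hTayx).1
    have hix : ⟪ξ, υt⟫ = ⟪ξ, υs⟫ + ⟪ξ, x⟫ := by rw [← hpt, inner_add_right]
    have hDx3' : τ3 / 3 * ‖mApp D x‖ ^ 3
        ≤ τ3 / 3 * (κ * ‖mApp S x + mApp S⁻¹ ξ‖ + ‖mApp D u‖) ^ 3 :=
      mul_le_mul_of_nonneg_left hDx3 (by positivity)
    linarith [habs, hq_id, hix, hpoly, hDx3']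
  exact abs_le.mpr ⟨hlow, hup⟩
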